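/- If two finite simple graphs G and H have the same chromatic symmetric function, then Σ_{v∈V(G)} d(v)² = Σ_{v∈V(H)} d(v)², where d(v) denotes the degree of vertex v. -/

import Mathlib

open SimpleGraph

/- The chromatic symmetric function of `G`, specialized to the `n` variables
`x_0, …, x_{n-1}`: the sum, over all proper colorings `κ : V → Fin n`, of
`∏_{v} x_{κ v}`.  Two graphs have the same chromatic symmetric function iff
these specializations agree for every `n`. -/
open scoped Classical in
noncomputable def csf {V : Type*} [Fintype V] (G : SimpleGraph V) (n : ℕ) :
    MvPolynomial (Fin n) ℤ :=
  ∑ κ : V → Fin n,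
    if ∀ u w, G.Adj u w → κ u ≠ κ w then ∏ v, MvPolynomial.X (κ v) else 0

namespace CsfAux

open Finset

variable {V : Type*} [Fintype V]

/-- Proper colorings with prescribed fiber cardinalities. -/
noncomputable def pcol (G : SimpleGraph V) (n : ℕ) (m : Fin n → ℕ) :
    Finset (V → Fin n) := by
  classical
  exact univ.filter fun κ => (∀ u w, G.Adj u w → κ u ≠ κ w) ∧
    ∀ i, (univ.filter fun v => κ v = i).card = m i

lemma mem_pcol {G : SimpleGraph V} {n : ℕ} {m : Fin n → ℕ} {κ : V → Fin n} :
    κ ∈ pcol G n m ↔ (∀ u w, G.Adj u w → κ u ≠ κ w) ∧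
      ∀ i, (univ.filter fun v => κ v = i).card = m i := by
  classical
  simp [pcol]

lemma prod_X_eq {n : ℕ} (κ : V → Fin n) :
    (∏ v, (MvPolynomial.X (κ v) : MvPolynomial (Fin n) ℤ)) =
      MvPolynomial.monomial (∑ v, Finsupp.single (κ v) 1) 1 := by
  classical
  induction (univ : Finset V) using Finset.cons_induction with
  | empty => simp
  | cons a s ha ih =>
      rw [Finset.prod_cons, Finset.sum_cons, ih]
      rw [show (MvPolynomial.X (κ a) : MvPolynomial (Fin n) ℤ) =
        MvPolynomial.monomial (Finsupp.single (κ a) 1) 1 from rfl]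
      rw [MvPolynomial.monomial_mul, one_mul]

lemma coeff_csf (G : SimpleGraph V) (n : ℕ) (m : Fin n → ℕ) :
    MvPolynomial.coeff (Finsupp.equivFunOnFinite.symm m) (csf G n) =
      ((pcol G n m).card : ℤ) := by
  classical
  rw [csf, MvPolynomial.coeff_sum]
  have : ∀ κ : V → Fin n,
      MvPolynomial.coeff (Finsupp.equivFunOnFinite.symm m)
        (if ∀ u w, G.Adj u w → κ u ≠ κ w then ∏ v, MvPolynomial.X (κ v) else 0)
      = if κ ∈ pcol G n m then (1 : ℤ) else 0 := by
    intro κ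
    rw [apply_ite (MvPolynomial.coeff (Finsupp.equivFunOnFinite.symm m)),
      MvPolynomial.coeff_zero, prod_X_eq, MvPolynomial.coeff_monomial]
    have hcv : ((∑ v, Finsupp.single (κ v) 1 : Fin n →₀ ℕ) = Finsupp.equivFunOnFinite.symm m)
        ↔ ∀ i, (univ.filter fun v => κ v = i).card = m i := by
      rw [← Equiv.apply_eq_iff_eq Finsupp.equivFunOnFinite, Equiv.apply_symm_apply,
        funext_iff]
      apply forall_congr'
      intro i
      have : (Finsupp.equivFunOnFinite (∑ v, Finsupp.single (κ v) 1 : Fin n →₀ ℕ)) i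
          = (univ.filter fun v => κ v = i).card := by
        simp only [Finsupp.equivFunOnFinite_apply]
        rw [Finset.sum_apply' i]
        rw [Finset.card_filter]
        refine Finset.sum_congr rfl fun v _ => ?_
        rw [Finsupp.single_apply]
      rw [this]
    by_cases hp : ∀ u w, G.Adj u w → κ u ≠ κ w
    · rw [if_pos hp]
      by_cases hc : κ ∈ pcol G n m
      · rw [if_pos hc, if_pos (hcv.2 (mem_pcol.1 hc).2)]
      · rw [if_neg hc, if_neg]
        intro hh
        exact hc (mem_pcol.2 ⟨hp, hcv.1 hh⟩)
    · rw [if_neg hp, if_neg]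
      intro hc
      exact hp (mem_pcol.1 hc).1
  rw [Finset.sum_congr rfl fun κ _ => this κ]
  rw [Finset.sum_boole]
  norm_cast
  congr 1
  ext κ
  simp


lemma pcol_card_eq {W : Type*} [Fintype W] {G : SimpleGraph V} {H : SimpleGraph W}
    (h : ∀ n, csf G n = csf H n) (n : ℕ) (m : Fin n → ℕ) :
    (pcol G n m).card = (pcol H n m).card := by
  have := coeff_csf G n m
  rw [h n, coeff_csf H n m] at this
  exact_mod_cast this.symm

lemma sum_pattern {G : SimpleGraph V} {n : ℕ} {m : Fin n → ℕ} {κ : V → Fin n}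
    (hκ : κ ∈ pcol G n m) : ∑ i, m i = Fintype.card V := by
  classical
  have h1 := Finset.card_eq_sum_card_fiberwise
    (f := κ) (s := univ) (t := univ) (fun x _ => mem_univ _)
  rw [← Finset.card_univ, h1]
  exact (Finset.sum_congr rfl fun i _ => (mem_pcol.1 hκ).2 i).symm

lemma card_eq {W : Type*} [Fintype W] {G : SimpleGraph V} {H : SimpleGraph W}
    (h : ∀ n, csf G n = csf H n) : Fintype.card V = Fintype.card W := by
  classical
  set n₀ := Fintype.card V + Fintype.card W with hn₀
  obtain ⟨f⟩ : Nonempty (V ↪ Fin n₀) := by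
    apply Function.Embedding.nonempty_of_card_le
    simp [hn₀]
  set m₀ : Fin n₀ → ℕ := fun i => (univ.filter fun v => f v = i).card with hm₀
  have hf : (f : V → Fin n₀) ∈ pcol G n₀ m₀ := by
    refine mem_pcol.2 ⟨fun u w huw => ?_, fun i => rfl⟩
    exact fun hc => (G.ne_of_adj huw) (f.injective hc)
  have hne : (pcol H n₀ m₀).Nonempty := by
    rw [← Finset.card_pos, ← pcol_card_eq h, Finset.card_pos]
    exact ⟨f, hf⟩
  obtain ⟨κ', hκ'⟩ := hne
  rw [← sum_pattern hf, sum_pattern hκ']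


section Combinatorics

variable [DecidableEq V] (G : SimpleGraph V) [DecidableRel G.Adj]

/-- Non-edges, as 2-element subsets. -/
def NEF : Finset (Finset V) :=
  (univ.powersetCard 2).filter fun p => ∀ u ∈ p, ∀ w ∈ p, ¬ G.Adj u w

/-- Ordered pairs of disjoint non-edges. -/
def DP : Finset (Finset V × Finset V) :=
  ((NEF G) ×ˢ (NEF G)).filter fun pq => Disjoint pq.1 pq.2

def nonnbrs (v : V) : Finset V := univ.filter fun w => w ≠ v ∧ ¬ G.Adj v w

lemma mem_NEF {p : Finset V} :
    p ∈ NEF G ↔ p.card = 2 ∧ ∀ u ∈ p, ∀ w ∈ p, ¬ G.Adj u w := by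
  simp [NEF, Finset.mem_powersetCard_univ]

lemma pair_mem_NEF {v w : V} (hvw : v ≠ w) (hadj : ¬ G.Adj v w) :
    ({v, w} : Finset V) ∈ NEF G := by
  refine (mem_NEF G).2 ⟨Finset.card_pair hvw, ?_⟩
  intro a ha b hb
  simp only [Finset.mem_insert, Finset.mem_singleton] at ha hb
  rcases ha with rfl | rfl <;> rcases hb with rfl | rfl <;>
    simp_all [SimpleGraph.adj_comm]

lemma eq_pair_of_mem_NEF {p : Finset V} (hp : p ∈ NEF G) {v : V} (hv : v ∈ p) :
    ∃ w, w ∈ nonnbrs G v ∧ p = {v, w} := by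
  obtain ⟨a, b, hab, rfl⟩ := Finset.card_eq_two.1 ((mem_NEF G).1 hp).1
  have hnadj := ((mem_NEF G).1 hp).2
  simp only [Finset.mem_insert, Finset.mem_singleton] at hv
  rcases hv with rfl | rfl
  · exact ⟨b, by simp [nonnbrs, hab.symm, hnadj v (by simp) b (by simp)], rfl⟩
  · refine ⟨a, by simp [nonnbrs, hab, hnadj v (by simp) a (by simp)], ?_⟩
    rw [Finset.pair_comm]

lemma eq_pair_of_two_mem {p : Finset V} (h2 : p.card = 2) {v w : V} (hvw : v ≠ w)
    (hv : v ∈ p) (hw : w ∈ p) : p = {v, w} := by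
  refine (Finset.eq_of_subset_of_card_le ?_ ?_).symm
  · intro x hx
    simp only [Finset.mem_insert, Finset.mem_singleton] at hx
    rcases hx with rfl | rfl <;> assumption
  · rw [h2, Finset.card_pair hvw]

/-- helper1 : non-edges through `v` are in bijection with non-neighbours. -/
lemma card_NEF_filter (v : V) :
    ((NEF G).filter fun p => v ∈ p).card = (nonnbrs G v).card := by
  refine (Finset.card_bij (fun w _ => ({v, w} : Finset V)) ?_ ?_ ?_).symm
  · intro w hw
    simp only [nonnbrs, Finset.mem_filter, Finset.mem_univ, true_and] at hw
    exact Finset.mem_filter.2 ⟨pair_mem_NEF G (Ne.symm hw.1) hw.2, by simp⟩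
  · intro a ha b hb hab
    have : b ∈ ({v, a} : Finset V) := by
      rw [show ({v, a} : Finset V) = {v, b} from hab]; simp
    simp only [Finset.mem_insert, Finset.mem_singleton] at this
    rcases this with rfl | rfl
    · simp only [nonnbrs, Finset.mem_filter] at hb
      exact absurd rfl hb.2.1
    · rfl
  · intro p hp
    obtain ⟨hp1, hp2⟩ := Finset.mem_filter.1 hp
    obtain ⟨w, hw, rfl⟩ := eq_pair_of_mem_NEF G hp1 hp2
    exact ⟨w, hw, rfl⟩

lemma F1 : ∑ v, (nonnbrs G v).card = 2 * (NEF G).card := by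
  have h1 : ∀ v, (nonnbrs G v).card = ∑ p ∈ NEF G, if v ∈ p then 1 else 0 := by
    intro v
    rw [← card_NEF_filter G v, Finset.card_filter]
  rw [Finset.sum_congr rfl fun v _ => h1 v, Finset.sum_comm]
  rw [Finset.sum_congr rfl (g := fun _ => 2) ?_, Finset.sum_const, smul_eq_mul, mul_comm]
  intro p hp
  rw [← Finset.card_filter]
  have : (univ.filter fun v => v ∈ p) = p := by ext x; simp
  rw [this, ((mem_NEF G).1 hp).1]

lemma F2 : (NEF G).offDiag.card
    = (DP G).card + ∑ v, ((nonnbrs G v).card * (nonnbrs G v).card - (nonnbrs G v).card) := by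
  classical
  have hsplit := Finset.card_filter_add_card_filter_not
    (s := (NEF G).offDiag) (p := fun pq => Disjoint pq.1 pq.2)
  have hD : (NEF G).offDiag.filter (fun pq => Disjoint pq.1 pq.2) = DP G := by
    ext pq
    simp only [DP, Finset.mem_filter, Finset.mem_offDiag, Finset.mem_product]
    constructor
    · rintro ⟨⟨h1, h2, _⟩, h4⟩; exact ⟨⟨h1, h2⟩, h4⟩
    · rintro ⟨⟨h1, h2⟩, h4⟩
      refine ⟨⟨h1, h2, fun he => ?_⟩, h4⟩
      rw [← he] at h4
      rw [Finset.disjoint_self_iff_empty] at h4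
      have := ((mem_NEF G).1 h1).1
      rw [h4] at this
      simp at this
  have hnd : (NEF G).offDiag.filter (fun pq => ¬ Disjoint pq.1 pq.2)
      = univ.biUnion (fun v => ((NEF G).filter fun p => v ∈ p).offDiag) := by
    ext pq
    simp only [Finset.mem_filter, Finset.mem_offDiag, Finset.mem_biUnion, Finset.mem_univ,
      true_and]
    constructor
    · rintro ⟨⟨h1, h2, h3⟩, h4⟩
      obtain ⟨v, hv1, hv2⟩ := Finset.not_disjoint_iff.1 h4
      exact ⟨v, ⟨h1, hv1⟩, ⟨h2, hv2⟩, h3⟩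
    · rintro ⟨v, ⟨h1, hv1⟩, ⟨h2, hv2⟩, h3⟩
      exact ⟨⟨h1, h2, h3⟩, Finset.not_disjoint_iff.2 ⟨v, hv1, hv2⟩⟩
  have hdisj : ∀ v ∈ (univ : Finset V), ∀ w ∈ (univ : Finset V), v ≠ w →
      Disjoint (((NEF G).filter fun p => v ∈ p).offDiag)
        (((NEF G).filter fun p => w ∈ p).offDiag) := by
    intro v _ w _ hvw
    rw [Finset.disjoint_left]
    rintro pq h1 h2
    rw [Finset.mem_offDiag] at h1 h2
    obtain ⟨hp1, hpv⟩ := Finset.mem_filter.1 h1.1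
    obtain ⟨hq1, hqv⟩ := Finset.mem_filter.1 h1.2.1
    have hne := h1.2.2
    obtain ⟨-, hpw⟩ := Finset.mem_filter.1 h2.1
    obtain ⟨-, hqw⟩ := Finset.mem_filter.1 h2.2.1
    have e1 := eq_pair_of_two_mem ((mem_NEF G).1 hp1).1 hvw hpv hpw
    have e2 := eq_pair_of_two_mem ((mem_NEF G).1 hq1).1 hvw hqv hqw
    exact hne (e1.trans e2.symm)
  rw [← hsplit, hD, hnd, Finset.card_biUnion hdisj]
  congr 1
  refine Finset.sum_congr rfl fun v _ => ?_
  rw [Finset.offDiag_card, card_NEF_filter G v]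

lemma F3 (v : V) : (nonnbrs G v).card + G.degree v = Fintype.card V - 1 := by
  classical
  have hsplit := Finset.card_filter_add_card_filter_not
    (s := (univ : Finset V).erase v) (p := fun w => G.Adj v w)
  have h1 : ((univ : Finset V).erase v).filter (fun w => G.Adj v w) = G.neighborFinset v := by
    ext w
    simp only [Finset.mem_filter, Finset.mem_erase, Finset.mem_univ,
      SimpleGraph.mem_neighborFinset, true_and, and_true]
    exact ⟨fun h => h.2, fun h => ⟨h.ne', h⟩⟩
  have h2 : ((univ : Finset V).erase v).filter (fun w => ¬ G.Adj v w) = nonnbrs G v := by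
    ext w
    simp [nonnbrs, and_comm]
  rw [h1, h2] at hsplit
  rw [add_comm] at hsplit
  rw [SimpleGraph.degree, hsplit, Finset.card_erase_of_mem (mem_univ v), Finset.card_univ]


lemma F5 (hN : 2 ≤ Fintype.card V) :
    (pcol G (Fintype.card V - 1) (fun i => if (i : ℕ) = 0 then 2 else 1)).card
      = (NEF G).card * Nat.factorial (Fintype.card V - 2) := by
  classical
  set N := Fintype.card V with hNdef
  set n := N - 1 with hn
  have hn1 : 1 ≤ n := by omega
  set z : Fin n := ⟨0, by omega⟩ with hz
  set m : Fin n → ℕ := fun i => if (i : ℕ) = 0 then 2 else 1 with hm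
  have hmz : m z = 2 := by simp [hm, hz]
  have hmnz : ∀ i : Fin n, i ≠ z → m i = 1 := by
    intro i hi
    have : ¬ ((i : ℕ) = 0) := fun h0 => hi (Fin.ext h0)
    simp [hm, this]
  have hmaps : ∀ κ ∈ pcol G n m, (univ.filter fun v => κ v = z) ∈ NEF G := by
    intro κ hκ
    obtain ⟨hp, hc⟩ := mem_pcol.1 hκ
    refine (mem_NEF G).2 ⟨by rw [hc z, hmz], ?_⟩
    intro u hu w hw hadj
    rw [Finset.mem_filter] at hu hw
    exact hp u w hadj (hu.2.trans hw.2.symm)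
  rw [Finset.card_eq_sum_card_fiberwise hmaps]
  rw [Finset.sum_congr rfl (g := fun _ => Nat.factorial (N - 2)) ?_, Finset.sum_const, smul_eq_mul]
  intro p hp
  have hpc : p.card = 2 := ((mem_NEF G).1 hp).1
  have hpn : ∀ u ∈ p, ∀ w ∈ p, ¬ G.Adj u w := ((mem_NEF G).1 hp).2
  have hTcard : Fintype.card {v : V // v ∉ p} = N - 2 := by
    rw [Fintype.card_subtype]
    have h' : univ.filter (fun v => v ∉ p) = univ \ p := by ext x; simp
    rw [h', Finset.card_sdiff_of_subset (Finset.subset_univ p), Finset.card_univ, hpc]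
  have hUcard : Fintype.card {i : Fin n // i ≠ z} = N - 2 := by
    rw [Fintype.card_subtype, Finset.filter_ne', Finset.card_erase_of_mem (mem_univ z),
      Finset.card_univ, Fintype.card_fin]
    omega
  set S := ((pcol G n m).filter (fun κ => (univ.filter fun v => κ v = z) = p)) with hSdef
  have hmem : ∀ κ ∈ S, (∀ u w, G.Adj u w → κ u ≠ κ w) ∧
      (∀ i, (univ.filter fun v => κ v = i).card = m i) ∧
      (univ.filter fun v => κ v = z) = p := by
    intro κ hκ
    obtain ⟨h1, h2⟩ := Finset.mem_filter.1 hκ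
    exact ⟨(mem_pcol.1 h1).1, (mem_pcol.1 h1).2, h2⟩
  have hne : ∀ (κ : ↥S) (v : {v : V // v ∉ p}), κ.1 v.1 ≠ z := by
    rintro κ ⟨v, hv⟩ hvz
    apply hv
    rw [← (hmem κ.1 κ.2).2.2]
    simp [hvz]
  have hbij : ∀ κ : ↥S, Function.Bijective
      (fun v : {v : V // v ∉ p} => (⟨κ.1 v.1, hne κ v⟩ : {i : Fin n // i ≠ z})) := by
    intro κ
    obtain ⟨hprop, hcard, hfib⟩ := hmem κ.1 κ.2
    constructor
    · rintro ⟨a, ha⟩ ⟨b, hb⟩ hab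
      simp only [Subtype.mk.injEq] at hab ⊢
      have hi : (univ.filter fun v => κ.1 v = κ.1 a).card = 1 := by
        rw [hcard (κ.1 a), hmnz _ (hne κ ⟨a, ha⟩)]
      exact Finset.card_le_one.1 (le_of_eq hi) a (by simp) b (by simp [hab])
    · rintro ⟨i, hi⟩
      have hi1 : (univ.filter fun v => κ.1 v = i).card = 1 := by
        rw [hcard i, hmnz i hi]
      obtain ⟨w, hw⟩ := Finset.card_eq_one.1 hi1
      have hwi : κ.1 w = i := by
        have : w ∈ univ.filter fun v => κ.1 v = i := by rw [hw]; simp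
        exact (Finset.mem_filter.1 this).2
      have hwp : w ∉ p := by
        intro hwp
        rw [← hfib, Finset.mem_filter] at hwp
        exact hi (hwi ▸ hwp.2)
      exact ⟨⟨w, hwp⟩, Subtype.ext hwi⟩
  rw [← Fintype.card_coe S]
  rw [Fintype.card_of_bijective
    (f := fun κ : ↥S => Equiv.ofBijective _ (hbij κ)) ?_]
  · rw [Fintype.card_equiv (Fintype.equivOfCardEq (hTcard.trans hUcard.symm)), hTcard]
  constructor
  · intro κ1 κ2 h12
    apply Subtype.ext; funext v
    by_cases hv : v ∈ p
    · have e1 : κ1.1 v = z := by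
        have h' := (hmem κ1.1 κ1.2).2.2
        rw [← h', Finset.mem_filter] at hv
        exact hv.2
      have e2 : κ2.1 v = z := by
        have h' := (hmem κ2.1 κ2.2).2.2
        rw [← h', Finset.mem_filter] at hv
        exact hv.2
      rw [e1, e2]
    · have h3 := DFunLike.congr_fun h12 (⟨v, hv⟩ : {v : V // v ∉ p})
      simpa [Equiv.ofBijective] using congrArg Subtype.val h3
  · intro e
    set κ0 : V → Fin n := fun v => if h : v ∈ p then z else (e ⟨v, h⟩).1 with hκ0
    have hfib : (univ.filter fun v => κ0 v = z) = p := by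
      ext v
      simp only [Finset.mem_filter, Finset.mem_univ, true_and]
      by_cases hv : v ∈ p
      · simp [hκ0, hv]
      · simp only [hκ0, dif_neg hv]
        exact ⟨fun h' => absurd h' (e ⟨v, hv⟩).2, fun h' => absurd h' hv⟩
    have hproper : ∀ u w, G.Adj u w → κ0 u ≠ κ0 w := by
      intro u w hadj heq
      by_cases hu : u ∈ p <;> by_cases hw : w ∈ p
      · exact hpn u hu w hw hadj
      · simp only [hκ0, dif_pos hu, dif_neg hw] at heq
        exact (e ⟨w, hw⟩).2 heq.symm
      · simp only [hκ0, dif_neg hu, dif_pos hw] at heq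
        exact (e ⟨u, hu⟩).2 heq
      · simp only [hκ0, dif_neg hu, dif_neg hw] at heq
        have h4 := e.injective (Subtype.ext heq)
        have h5 : u = w := congrArg Subtype.val h4
        exact G.ne_of_adj hadj h5
    have hcards : ∀ i, (univ.filter fun v => κ0 v = i).card = m i := by
      intro i
      by_cases hiz : i = z
      · subst hiz; rw [hfib, hpc, hmz]
      · have hsing : (univ.filter fun v => κ0 v = i) = {(e.symm ⟨i, hiz⟩).1} := by
          ext v
          simp only [Finset.mem_filter, Finset.mem_univ, true_and, Finset.mem_singleton]
          by_cases hv : v ∈ p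
          · simp only [hκ0, dif_pos hv]
            constructor
            · intro h'; exact absurd h'.symm (Ne.symm (fun hc => hiz hc.symm))
            · intro h'
              exfalso
              have := (e.symm ⟨i, hiz⟩).2
              rw [← h'] at this
              exact this hv
          · simp only [hκ0, dif_neg hv]
            constructor
            · intro h'
              have h6 : e ⟨v, hv⟩ = ⟨i, hiz⟩ := Subtype.ext h'
              have h7 : (⟨v, hv⟩ : {v : V // v ∉ p}) = e.symm ⟨i, hiz⟩ := by
                rw [← h6, Equiv.symm_apply_apply]
              exact congrArg Subtype.val h7
            · intro h'
              have h7 : (⟨v, hv⟩ : {v : V // v ∉ p}) = e.symm ⟨i, hiz⟩ := Subtype.ext h'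
              rw [h7, Equiv.apply_symm_apply]
        rw [hsing, Finset.card_singleton, hmnz i hiz]
    refine ⟨⟨κ0, Finset.mem_filter.2 ⟨mem_pcol.2 ⟨hproper, hcards⟩, hfib⟩⟩, ?_⟩
    apply Equiv.ext
    rintro ⟨v, hv⟩
    apply Subtype.ext
    simp [Equiv.ofBijective, hκ0, dif_neg hv]
    exact fun hvp => absurd hvp hv


lemma F6 (hN : 4 ≤ Fintype.card V) :
    (pcol G (Fintype.card V - 2) (fun i => if (i : ℕ) = 0 ∨ (i : ℕ) = 1 then 2 else 1)).card
      = (DP G).card * Nat.factorial (Fintype.card V - 4) := by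
  classical
  set N := Fintype.card V with hNdef
  set n := N - 2 with hn
  have hn1 : 2 ≤ n := by omega
  set z0 : Fin n := ⟨0, by omega⟩ with hz0
  set z1 : Fin n := ⟨1, by omega⟩ with hz1
  have hz01 : z0 ≠ z1 := by simp [hz0, hz1, Fin.ext_iff]
  set m : Fin n → ℕ := fun i => if (i : ℕ) = 0 ∨ (i : ℕ) = 1 then 2 else 1 with hm
  have hmz0 : m z0 = 2 := by simp [hm, hz0]
  have hmz1 : m z1 = 2 := by simp [hm, hz1]
  have hmnz : ∀ i : Fin n, i ≠ z0 → i ≠ z1 → m i = 1 := by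
    intro i h0 h1
    have c0 : ¬ ((i : ℕ) = 0) := fun hc => h0 (Fin.ext hc)
    have c1 : ¬ ((i : ℕ) = 1) := fun hc => h1 (Fin.ext hc)
    simp [hm, c0, c1]
  have hfibNEF : ∀ κ ∈ pcol G n m, ∀ zz : Fin n, m zz = 2 →
      (univ.filter fun v => κ v = zz) ∈ NEF G := by
    intro κ hκ zz hzz
    obtain ⟨hp, hc⟩ := mem_pcol.1 hκ
    refine (mem_NEF G).2 ⟨by rw [hc zz, hzz], ?_⟩
    intro u hu w hw hadj
    rw [Finset.mem_filter] at hu hw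
    exact hp u w hadj (hu.2.trans hw.2.symm)
  have hmaps : ∀ κ ∈ pcol G n m,
      ((univ.filter fun v => κ v = z0), (univ.filter fun v => κ v = z1)) ∈ DP G := by
    intro κ hκ
    refine Finset.mem_filter.2 ⟨Finset.mem_product.2
      ⟨hfibNEF κ hκ z0 hmz0, hfibNEF κ hκ z1 hmz1⟩, ?_⟩
    rw [Finset.disjoint_left]
    intro a ha hb
    rw [Finset.mem_filter] at ha hb
    exact hz01 (ha.2 ▸ hb.2 ▸ rfl)
  rw [Finset.card_eq_sum_card_fiberwise hmaps]
  rw [Finset.sum_congr rfl (g := fun _ => Nat.factorial (N - 4)) ?_, Finset.sum_const,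
    smul_eq_mul]
  rintro ⟨p, q⟩ hpq
  obtain ⟨hprod, hdisj⟩ := Finset.mem_filter.1 hpq
  obtain ⟨hp, hq⟩ := Finset.mem_product.1 hprod
  have hpc : p.card = 2 := ((mem_NEF G).1 hp).1
  have hqc : q.card = 2 := ((mem_NEF G).1 hq).1
  have hpn : ∀ u ∈ p, ∀ w ∈ p, ¬ G.Adj u w := ((mem_NEF G).1 hp).2
  have hqn : ∀ u ∈ q, ∀ w ∈ q, ¬ G.Adj u w := ((mem_NEF G).1 hq).2
  have hTcard : Fintype.card {v : V // v ∉ p ∧ v ∉ q} = N - 4 := by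
    rw [Fintype.card_subtype]
    have h' : univ.filter (fun v => v ∉ p ∧ v ∉ q) = univ \ (p ∪ q) := by
      ext x; simp [not_or]
    rw [h', Finset.card_sdiff_of_subset (Finset.subset_univ _), Finset.card_univ,
      Finset.card_union_of_disjoint hdisj, hpc, hqc]
  have hUcard : Fintype.card {i : Fin n // i ≠ z0 ∧ i ≠ z1} = N - 4 := by
    rw [Fintype.card_subtype]
    have h' : univ.filter (fun i : Fin n => i ≠ z0 ∧ i ≠ z1)
        = (univ.erase z0).erase z1 := by
      ext i
      simp only [Finset.mem_filter, Finset.mem_univ, true_and, Finset.mem_erase]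
      tauto
    rw [h', Finset.card_erase_of_mem, Finset.card_erase_of_mem (mem_univ z0),
      Finset.card_univ, Fintype.card_fin]
    · omega
    · exact Finset.mem_erase.2 ⟨Ne.symm hz01, mem_univ z1⟩
  set S := ((pcol G n m).filter (fun κ =>
    ((univ.filter fun v => κ v = z0), (univ.filter fun v => κ v = z1)) = (p, q))) with hSdef
  have hmem : ∀ κ ∈ S, (∀ u w, G.Adj u w → κ u ≠ κ w) ∧
      (∀ i, (univ.filter fun v => κ v = i).card = m i) ∧
      (univ.filter fun v => κ v = z0) = p ∧ (univ.filter fun v => κ v = z1) = q := by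
    intro κ hκ
    obtain ⟨h1, h2⟩ := Finset.mem_filter.1 hκ
    rw [Prod.ext_iff] at h2
    exact ⟨(mem_pcol.1 h1).1, (mem_pcol.1 h1).2, h2.1, h2.2⟩
  have hne : ∀ (κ : ↥S) (v : {v : V // v ∉ p ∧ v ∉ q}), κ.1 v.1 ≠ z0 ∧ κ.1 v.1 ≠ z1 := by
    rintro κ ⟨v, hv0, hv1⟩
    constructor
    · intro hvz
      apply hv0
      rw [← (hmem κ.1 κ.2).2.2.1]
      simp [hvz]
    · intro hvz
      apply hv1
      rw [← (hmem κ.1 κ.2).2.2.2]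
      simp [hvz]
  have hbij : ∀ κ : ↥S, Function.Bijective
      (fun v : {v : V // v ∉ p ∧ v ∉ q} =>
        (⟨κ.1 v.1, hne κ v⟩ : {i : Fin n // i ≠ z0 ∧ i ≠ z1})) := by
    intro κ
    obtain ⟨hprop, hcard, hfib0, hfib1⟩ := hmem κ.1 κ.2
    constructor
    · rintro ⟨a, ha⟩ ⟨b, hb⟩ hab
      simp only [Subtype.mk.injEq] at hab ⊢
      have hi : (univ.filter fun v => κ.1 v = κ.1 a).card = 1 := by
        rw [hcard (κ.1 a), hmnz _ (hne κ ⟨a, ha⟩).1 (hne κ ⟨a, ha⟩).2]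
      exact Finset.card_le_one.1 (le_of_eq hi) a (by simp) b (by simp [hab])
    · rintro ⟨i, hi0, hi1⟩
      have hi1' : (univ.filter fun v => κ.1 v = i).card = 1 := by
        rw [hcard i, hmnz i hi0 hi1]
      obtain ⟨w, hw⟩ := Finset.card_eq_one.1 hi1'
      have hwi : κ.1 w = i := by
        have : w ∈ univ.filter fun v => κ.1 v = i := by rw [hw]; simp
        exact (Finset.mem_filter.1 this).2
      have hwp : w ∉ p := by
        intro hwp
        rw [← hfib0, Finset.mem_filter] at hwp
        exact hi0 (hwi ▸ hwp.2)
      have hwq : w ∉ q := by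
        intro hwq
        rw [← hfib1, Finset.mem_filter] at hwq
        exact hi1 (hwi ▸ hwq.2)
      exact ⟨⟨w, hwp, hwq⟩, Subtype.ext hwi⟩
  rw [← Fintype.card_coe S]
  rw [Fintype.card_of_bijective
    (f := fun κ : ↥S => Equiv.ofBijective _ (hbij κ)) ?_]
  · rw [Fintype.card_equiv (Fintype.equivOfCardEq (hTcard.trans hUcard.symm)), hTcard]
  constructor
  · intro κ1 κ2 h12
    apply Subtype.ext; funext v
    by_cases hv0 : v ∈ p
    · have e1 : κ1.1 v = z0 := by
        have h' := (hmem κ1.1 κ1.2).2.2.1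
        rw [← h', Finset.mem_filter] at hv0
        exact hv0.2
      have e2 : κ2.1 v = z0 := by
        have h' := (hmem κ2.1 κ2.2).2.2.1
        rw [← h', Finset.mem_filter] at hv0
        exact hv0.2
      rw [e1, e2]
    · by_cases hv1 : v ∈ q
      · have e1 : κ1.1 v = z1 := by
          have h' := (hmem κ1.1 κ1.2).2.2.2
          rw [← h', Finset.mem_filter] at hv1
          exact hv1.2
        have e2 : κ2.1 v = z1 := by
          have h' := (hmem κ2.1 κ2.2).2.2.2
          rw [← h', Finset.mem_filter] at hv1
          exact hv1.2
        rw [e1, e2]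
      · have h3 := DFunLike.congr_fun h12 (⟨v, hv0, hv1⟩ : {v : V // v ∉ p ∧ v ∉ q})
        simpa [Equiv.ofBijective] using congrArg Subtype.val h3
  · intro e
    set κ0 : V → Fin n := fun v =>
      if h0 : v ∈ p then z0 else if h1 : v ∈ q then z1 else (e ⟨v, h0, h1⟩).1 with hκ0
    have hval : ∀ v (h0 : v ∉ p) (h1 : v ∉ q), κ0 v = (e ⟨v, h0, h1⟩).1 := by
      intro v h0 h1
      simp only [hκ0, dif_neg h0, dif_neg h1]
    have hvp : ∀ v ∈ p, κ0 v = z0 := fun v hv => by simp only [hκ0, dif_pos hv]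
    have hvq : ∀ v ∈ q, κ0 v = z1 := by
      intro v hv
      have h0 : v ∉ p := fun hc => (Finset.disjoint_left.1 hdisj hc) hv
      simp only [hκ0, dif_neg h0, dif_pos hv]
    have hclass : ∀ v, (κ0 v = z0 ↔ v ∈ p) ∧ (κ0 v = z1 ↔ v ∈ q) := by
      intro v
      by_cases h0 : v ∈ p
      · have h1 : v ∉ q := fun hc => (Finset.disjoint_left.1 hdisj h0) hc
        rw [hvp v h0]
        exact ⟨by simp [h0], by simp [h1, hz01]⟩
      · by_cases h1 : v ∈ q
        · rw [hvq v h1]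
          exact ⟨by simp [h0, Ne.symm hz01], by simp [h1]⟩
        · rw [hval v h0 h1]
          exact ⟨by simp [h0, (e ⟨v, h0, h1⟩).2.1], by simp [h1, (e ⟨v, h0, h1⟩).2.2]⟩
    have hfib0 : (univ.filter fun v => κ0 v = z0) = p := by
      ext v; simpa using (hclass v).1
    have hfib1 : (univ.filter fun v => κ0 v = z1) = q := by
      ext v; simpa using (hclass v).2
    have hproper : ∀ u w, G.Adj u w → κ0 u ≠ κ0 w := by
      intro u w hadj heq
      have hne' : u ≠ w := G.ne_of_adj hadj
      by_cases hu0 : u ∈ p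
      · have : w ∈ p := by
          rw [← (hclass w).1, ← heq, (hclass u).1.2 hu0]
        exact hpn u hu0 w this hadj
      · by_cases hu1 : u ∈ q
        · have : w ∈ q := by
            rw [← (hclass w).2, ← heq, (hclass u).2.2 hu1]
          exact hqn u hu1 w this hadj
        · by_cases hw0 : w ∈ p
          · exact hu0 (by rw [← (hclass u).1, heq, (hclass w).1.2 hw0])
          · by_cases hw1 : w ∈ q
            · exact hu1 (by rw [← (hclass u).2, heq, (hclass w).2.2 hw1])
            · rw [hval u hu0 hu1, hval w hw0 hw1] at heq
              have h4 := e.injective (Subtype.ext heq)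
              exact hne' (congrArg Subtype.val h4)
    have hcards : ∀ i, (univ.filter fun v => κ0 v = i).card = m i := by
      intro i
      by_cases hiz0 : i = z0
      · subst hiz0; rw [hfib0, hpc, hmz0]
      · by_cases hiz1 : i = z1
        · subst hiz1; rw [hfib1, hqc, hmz1]
        · have hsing : (univ.filter fun v => κ0 v = i)
              = {(e.symm ⟨i, hiz0, hiz1⟩).1} := by
            ext v
            simp only [Finset.mem_filter, Finset.mem_univ, true_and, Finset.mem_singleton]
            constructor
            · intro h'
              have h0 : v ∉ p := fun hc => hiz0 (by rw [← h', hvp v hc])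
              have h1 : v ∉ q := fun hc => hiz1 (by rw [← h', hvq v hc])
              rw [hval v h0 h1] at h'
              have h6 : e ⟨v, h0, h1⟩ = ⟨i, hiz0, hiz1⟩ := Subtype.ext h'
              have h7 : (⟨v, h0, h1⟩ : {v : V // v ∉ p ∧ v ∉ q})
                  = e.symm ⟨i, hiz0, hiz1⟩ := by
                rw [← h6, Equiv.symm_apply_apply]
              exact congrArg Subtype.val h7
            · intro h'
              have h0 : v ∉ p := by rw [h']; exact (e.symm ⟨i, hiz0, hiz1⟩).2.1
              have h1 : v ∉ q := by rw [h']; exact (e.symm ⟨i, hiz0, hiz1⟩).2.2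
              rw [hval v h0 h1]
              have h7 : (⟨v, h0, h1⟩ : {v : V // v ∉ p ∧ v ∉ q})
                  = e.symm ⟨i, hiz0, hiz1⟩ := Subtype.ext h'
              rw [h7, Equiv.apply_symm_apply]
          rw [hsing, Finset.card_singleton, hmnz i hiz0 hiz1]
    refine ⟨⟨κ0, Finset.mem_filter.2 ⟨mem_pcol.2 ⟨hproper, hcards⟩,
      by rw [Prod.ext_iff]; exact ⟨hfib0, hfib1⟩⟩⟩, ?_⟩
    apply Equiv.ext
    rintro ⟨v, hv0, hv1⟩
    apply Subtype.ext
    simp only [Equiv.ofBijective]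
    exact hval v hv0 hv1


lemma NEF_eq_empty (h2 : Fintype.card V < 2) : NEF G = ∅ := by
  rw [Finset.eq_empty_iff_forall_notMem]
  intro p hp
  have hc := ((mem_NEF G).1 hp).1
  have hle := Finset.card_le_univ p
  rw [hc] at hle
  omega

lemma DP_eq_empty (h4 : Fintype.card V < 4) : DP G = ∅ := by
  rw [Finset.eq_empty_iff_forall_notMem]
  rintro ⟨p, q⟩ hpq
  obtain ⟨hprod, hdisj⟩ := Finset.mem_filter.1 hpq
  obtain ⟨hp, hq⟩ := Finset.mem_product.1 hprod
  have hle := Finset.card_le_univ (p ∪ q)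
  rw [Finset.card_union_of_disjoint hdisj, ((mem_NEF G).1 hp).1, ((mem_NEF G).1 hq).1] at hle
  omega

lemma cast_sq_sub (a : ℕ) : ((a * a - a : ℕ) : ℤ) = (a : ℤ) * a - a := by
  rcases Nat.eq_zero_or_pos a with rfl | ha
  · simp
  · have h : a ≤ a * a := Nat.le_mul_of_pos_left a ha
    push_cast [Nat.cast_sub h]
    ring

lemma sum_sq_formula :
    (∑ v, (G.degree v : ℤ) ^ 2)
      = (Fintype.card V : ℤ) * ((Fintype.card V : ℤ) - 1) ^ 2
        - 4 * ((Fintype.card V : ℤ) - 1) * ((NEF G).card : ℤ)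
        + ((NEF G).card : ℤ) * ((NEF G).card : ℤ) + ((NEF G).card : ℤ)
        - ((DP G).card : ℤ) := by
  classical
  set N := Fintype.card V with hNdef
  have h3 : ∀ v : V, (G.degree v : ℤ) = (N : ℤ) - 1 - ((nonnbrs G v).card : ℤ) := by
    intro v
    have hN1 : 1 ≤ N := Fintype.card_pos_iff.2 ⟨v⟩
    have hf := F3 G v
    have hc : ((nonnbrs G v).card : ℤ) + (G.degree v : ℤ) = (N : ℤ) - 1 := by
      have := congrArg (Nat.cast (R := ℤ)) hf
      push_cast [Nat.cast_sub hN1] at this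
      exact this.trans (Nat.cast_sub hN1)
    linarith
  have h1 : (∑ v, ((nonnbrs G v).card : ℤ)) = 2 * ((NEF G).card : ℤ) := by
    exact_mod_cast congrArg (Nat.cast (R := ℤ)) (F1 G)
  have h2 : ((NEF G).card : ℤ) * ((NEF G).card : ℤ) - ((NEF G).card : ℤ)
      = ((DP G).card : ℤ)
        + ∑ v, (((nonnbrs G v).card : ℤ) * ((nonnbrs G v).card : ℤ)
            - ((nonnbrs G v).card : ℤ)) := by
    have hc := congrArg (Nat.cast (R := ℤ)) (F2 G)
    rw [Finset.offDiag_card, cast_sq_sub] at hc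
    rw [hc, Nat.cast_add, Nat.cast_sum]
    congr 1
    exact Finset.sum_congr rfl fun v _ => cast_sq_sub _
  have hsum : ∑ v, (G.degree v : ℤ) ^ 2
      = ∑ v : V, (((N : ℤ) - 1) ^ 2
          - 2 * ((N : ℤ) - 1) * ((nonnbrs G v).card : ℤ)
          + (((nonnbrs G v).card : ℤ) * ((nonnbrs G v).card : ℤ)
            - ((nonnbrs G v).card : ℤ)) + ((nonnbrs G v).card : ℤ)) := by
    refine Finset.sum_congr rfl fun v _ => ?_
    rw [h3 v]; ring
  rw [hsum]
  rw [Finset.sum_add_distrib, Finset.sum_add_distrib, Finset.sum_sub_distrib,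
    Finset.sum_const, ← Finset.mul_sum, Finset.card_univ]
  rw [h1]
  rw [show (∑ v, (((nonnbrs G v).card : ℤ) * ((nonnbrs G v).card : ℤ)
      - ((nonnbrs G v).card : ℤ))) = ((NEF G).card : ℤ) * ((NEF G).card : ℤ)
      - ((NEF G).card : ℤ) - ((DP G).card : ℤ) from by linarith [h2]]
  ring

end Combinatorics

end CsfAux

/-- If two finite simple graphs have the same chromatic symmetric function, then the
sums of the squares of their vertex degrees agree. -/
theorem sum_degree_sq_eq_of_csf_eq {V W : Type*} [Fintype V] [Fintype W]
    (G : SimpleGraph V) (H : SimpleGraph W) [DecidableRel G.Adj] [DecidableRel H.Adj]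
    (h : ∀ n, csf G n = csf H n) :
    ∑ v : V, (G.degree v) ^ 2 = ∑ w : W, (H.degree w) ^ 2 := by
  classical
  have hcard : Fintype.card V = Fintype.card W := CsfAux.card_eq h
  have hNE : (CsfAux.NEF G).card = (CsfAux.NEF H).card := by
    by_cases h2 : 2 ≤ Fintype.card V
    · have g5 := CsfAux.F5 G h2
      have h5 := CsfAux.F5 H (by omega)
      rw [← hcard] at h5
      have ht := CsfAux.pcol_card_eq h (Fintype.card V - 1)
        (fun i => if (i : ℕ) = 0 then 2 else 1)
      rw [g5, h5] at ht
      exact Nat.eq_of_mul_eq_mul_right (Nat.factorial_pos _) ht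
    · rw [CsfAux.NEF_eq_empty G (by omega), CsfAux.NEF_eq_empty H (by omega)]
      rfl
  have hDP : (CsfAux.DP G).card = (CsfAux.DP H).card := by
    by_cases h4 : 4 ≤ Fintype.card V
    · have g6 := CsfAux.F6 G h4
      have h6 := CsfAux.F6 H (by omega)
      rw [← hcard] at h6
      have ht := CsfAux.pcol_card_eq h (Fintype.card V - 2)
        (fun i => if (i : ℕ) = 0 ∨ (i : ℕ) = 1 then 2 else 1)
      rw [g6, h6] at ht
      exact Nat.eq_of_mul_eq_mul_right (Nat.factorial_pos _) ht
    · rw [CsfAux.DP_eq_empty G (by omega), CsfAux.DP_eq_empty H (by omega)]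
      rfl
  have hz : (∑ v, (G.degree v : ℤ) ^ 2) = ∑ w, (H.degree w : ℤ) ^ 2 := by
    rw [CsfAux.sum_sq_formula G, CsfAux.sum_sq_formula H, hcard, hNE, hDP]
  exact_mod_cast hz
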